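/- Let K be a field, σ an automorphism of K of order 2, F a subfield of K with σ(F)=F but F not contained in Fix(σ), V a vector space over K, β : V×V → K a nonzero hermitian form with respect to σ, and L : K → F a nonzero F-linear map. Then the σ|_F-sesquilinear form Lβ = L∘β over F is hermitian (with respect to the restriction of σ to F) if and only if L∘σ = σ∘L as maps K → F; and Lβ is neither symmetric, alternating, nor hermitian if and only if L∘σ ≠ σ∘L. -/
import Mathlib


/-- Let `K` be a field, `σ` an automorphism of `K` of order `2`, `F` a
subfield of `K` with `σ(F) = F` but `F` not contained in `Fix(σ)`, `V` a vector space
over `K`, `β : V × V → K` a nonzero hermitian form with respect to `σ`, and `L : K → F`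
a nonzero `F`-linear map.  Then the `σ|_F`-sesquilinear form `Lβ = L ∘ β` over `F` is
hermitian (with respect to the restriction of `σ` to `F`) if and only if `L ∘ σ = σ ∘ L`
as maps `K → F`; and `Lβ` is neither symmetric, alternating, nor hermitian if and only if
`L ∘ σ ≠ σ ∘ L`. -/
theorem stmt_6 {K : Type*} [Field K]
    (σ : K ≃+* K) (hσ2 : ∀ x : K, σ (σ x) = x) (hσne : σ ≠ RingEquiv.refl K)
    (F : Subfield K) (hσF : ∀ x : K, σ x ∈ F ↔ x ∈ F)
    (hFnotfix : ¬ (∀ x : K, x ∈ F → σ x = x))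
    {V : Type*} [AddCommGroup V] [Module K V]
    (β : V → V → K)
    (hβadd₁ : ∀ u v w : V, β (u + v) w = β u w + β v w)
    (hβadd₂ : ∀ u v w : V, β u (v + w) = β u v + β u w)
    (hβsmul₁ : ∀ (a : K) (v w : V), β (a • v) w = a * β v w)
    (hβsmul₂ : ∀ (a : K) (v w : V), β v (a • w) = σ a * β v w)
    (hβherm : ∀ v w : V, β w v = σ (β v w))
    (hβne : ∃ v w : V, β v w ≠ 0)
    (L : K → F)
    (hLadd : ∀ x y : K, L (x + y) = L x + L y)
    (hLsmul : ∀ (c : F) (x : K), L ((c : K) * x) = c * L x)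
    (hL0 : ∃ x : K, L x ≠ 0) :
    ((∀ v w : V, (L (β w v) : K) = σ (L (β v w) : K)) ↔
      (∀ x : K, (L (σ x) : K) = σ (L x : K))) ∧
    ((¬ (∀ v w : V, L (β w v) = L (β v w)) ∧
      ¬ (∀ v : V, L (β v v) = 0) ∧
      ¬ (∀ v w : V, (L (β w v) : K) = σ (L (β v w) : K))) ↔
      ¬ (∀ x : K, (L (σ x) : K) = σ (L x : K))) := by
  obtain ⟨v₀, w₀, hd⟩ := hβne
  -- every element of K is a value of β
  have hsurj : ∀ y : K, ∃ p q : V, β p q = y ∧ β q p = σ y := by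
    intro y
    refine ⟨(y * (β v₀ w₀)⁻¹) • v₀, w₀, ?_, ?_⟩
    · rw [hβsmul₁]; field_simp
    · rw [hβherm, hβsmul₁]; congr 1; field_simp
  -- there is v with β v v ≠ 0
  have hvex : ∃ v : V, β v v ≠ 0 := by
    by_contra h
    push_neg at h
    have hneg : ∀ y : K, σ y = -y := by
      intro y
      obtain ⟨p, q, h1, h2⟩ := hsurj y
      have h0 : β (p + q) (p + q) = 0 := h _
      rw [hβadd₁, hβadd₂, hβadd₂, h p, h q, h1, h2] at h0
      linear_combination h0
    apply hσne
    have h1 := hneg 1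
    rw [map_one] at h1
    ext x
    have h2 := hneg x
    show σ x = x
    rw [h2]
    linear_combination (-x) * h1
  obtain ⟨v, hv⟩ := hvex
  -- c ∈ F not fixed
  push_neg at hFnotfix
  obtain ⟨c, hcF, hcne⟩ := hFnotfix
  have hσcF : σ c ∈ F := (hσF c).mpr hcF
  obtain ⟨x₀, hx₀⟩ := hL0
  -- Lβ never symmetric
  have hnsym : ¬ (∀ v w : V, L (β w v) = L (β v w)) := by
    intro hsym
    have hLσ : ∀ y : K, L (σ y) = L y := by
      intro y
      obtain ⟨p, q, h1, h2⟩ := hsurj y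
      have := hsym p q
      rwa [h1, h2] at this
    have h1 : L (σ (c * x₀)) = L (c * x₀) := hLσ _
    rw [map_mul] at h1
    have h2 : L (σ c * σ x₀) = (⟨σ c, hσcF⟩ : F) * L (σ x₀) := hLsmul ⟨σ c, hσcF⟩ (σ x₀)
    have h3 : L (c * x₀) = (⟨c, hcF⟩ : F) * L x₀ := hLsmul ⟨c, hcF⟩ x₀
    rw [h2, h3, hLσ x₀] at h1
    exact hcne (congrArg Subtype.val (mul_right_cancel₀ hx₀ h1))
  -- Lβ never alternating
  have hnalt : ¬ (∀ v : V, L (β v v) = 0) := by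
    intro halt
    have hLσ : ∀ y : K, L (σ y) = - L y := by
      intro y
      obtain ⟨p, q, h1, h2⟩ := hsurj y
      have h0 : L (β (p + q) (p + q)) = 0 := halt _
      rw [hβadd₁, hβadd₂, hβadd₂, hLadd, hLadd, hLadd, halt p, halt q, h1, h2] at h0
      linear_combination h0
    have h1 : L (σ (c * x₀)) = - L (c * x₀) := hLσ _
    rw [map_mul] at h1
    have h2 : L (σ c * σ x₀) = (⟨σ c, hσcF⟩ : F) * L (σ x₀) := hLsmul ⟨σ c, hσcF⟩ (σ x₀)
    have h3 : L (c * x₀) = (⟨c, hcF⟩ : F) * L x₀ := hLsmul ⟨c, hcF⟩ x₀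
    rw [h2, h3, hLσ x₀] at h1
    have h4 : (⟨σ c, hσcF⟩ : F) * L x₀ = (⟨c, hcF⟩ : F) * L x₀ := by linear_combination -h1
    exact hcne (congrArg Subtype.val (mul_right_cancel₀ hx₀ h4))
  -- first iff
  have hiff : (∀ v w : V, (L (β w v) : K) = σ (L (β v w) : K)) ↔
      (∀ x : K, (L (σ x) : K) = σ (L x : K)) := by
    constructor
    · intro h x
      have h1 : β ((x * (β v v)⁻¹) • v) v = x := by rw [hβsmul₁]; field_simp
      have h2 : β v ((x * (β v v)⁻¹) • v) = σ x := by rw [hβherm, h1]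
      have := h ((x * (β v v)⁻¹) • v) v
      rwa [h1, h2] at this
    · intro h p q
      rw [hβherm]
      exact h _
  refine ⟨hiff, ?_, ?_⟩
  · rintro ⟨-, -, hnh⟩ hc
    exact hnh (hiff.mpr hc)
  · intro hne
    exact ⟨hnsym, hnalt, fun h => hne (hiff.mp h)⟩
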